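/- There is a universal constant c > 0 such that the following holds: for every integer d ≥ 2 and all ε, δ ∈ (0,1/2), setting k = ⌈c·d/(ε²·δ)⌉, there exists a string s of length d^k that is not (d,ε,δ)-locally repetitive. -/

import Mathlib

open Finset
open scoped Classical

/-- The average of the block of `s` of length `len` starting at position `j * len`. -/
noncomputable def blockAvg (s : ℕ → ℝ) (len j : ℕ) : ℝ :=
  (∑ i ∈ Finset.range len, s (j * len + i)) / len

/-- For a string of length `d ^ k`, the level-`ℓ` aligned block with index `j`
(of length `d ^ (k - ℓ)`) is `(d, ε)`-repetitive: the average of each of its `d`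
consecutive sub-blocks (which are level-`(ℓ+1)` aligned blocks) is within `ε`
of the block's average. -/
def blockRep (s : ℕ → ℝ) (d k : ℕ) (ε : ℝ) (ℓ j : ℕ) : Prop :=
  ∀ i ∈ Finset.range d,
    |blockAvg s (d ^ (k - ℓ)) j - blockAvg s (d ^ (k - (ℓ + 1))) (j * d + i)| ≤ ε

/-- The fraction of level-`ℓ` aligned blocks of `s` that are not `(d, ε)`-repetitive. -/
noncomputable def badFrac (s : ℕ → ℝ) (d k : ℕ) (ε : ℝ) (ℓ : ℕ) : ℝ :=
  (((Finset.range (d ^ ℓ)).filter (fun j => ¬ blockRep s d k ε ℓ j)).card : ℝ) / (d ^ ℓ : ℝ)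

/- ### Auxiliary construction -/

def childF (d m x i : ℕ) : ℕ :=
  if 1 ≤ x ∧ x + (d - 1) ≤ m then (if i = 0 then x + (d - 1) else x - 1)
  else if d - 1 ≤ x ∧ x + 1 ≤ m then (if i = 0 then x - (d - 1) else x + 1)
  else x

def posF (d m x0 : ℕ) : ℕ → ℕ → ℕ
  | 0, _ => x0
  | ℓ + 1, j => childF d m (posF d m x0 ℓ (j / d)) (j % d)

lemma sum_range_split' (f : ℕ → ℝ) (a b : ℕ) :
    ∑ i ∈ Finset.range (a + b), f i
      = ∑ i ∈ Finset.range a, f i + ∑ i ∈ Finset.range b, f (a + i) := by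
  have h := Finset.sum_Ico_consecutive f (Nat.zero_le a) (Nat.le_add_right a b)
  rw [← Finset.range_eq_Ico, ← Finset.range_eq_Ico] at h
  rw [← h, Finset.sum_Ico_eq_sum_range, Nat.add_sub_cancel_left]

lemma sum_range_mul' (f : ℕ → ℝ) (a b : ℕ) :
    ∑ i ∈ Finset.range (a * b), f i
      = ∑ p ∈ Finset.range a, ∑ q ∈ Finset.range b, f (p * b + q) := by
  induction a with
  | zero => simp
  | succ n ih =>
      rw [Finset.sum_range_succ, ← ih, Nat.succ_mul, sum_range_split']

lemma childF_le {d m x : ℕ} (hx : x ≤ m) (i : ℕ) : childF d m x i ≤ m := by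
  unfold childF; split_ifs <;> omega

lemma childF_frozen {d m x : ℕ} (hd : 2 ≤ d) (hx : x = 0 ∨ x = m) (i : ℕ) :
    childF d m x i = x := by
  unfold childF; split_ifs <;> omega

lemma childF_descr {d m x : ℕ} (hd : 2 ≤ d) (hm : 2 * d - 2 ≤ m)
    (h1 : 1 ≤ x) (h2 : x + 1 ≤ m) :
    ∃ σ : ℤ, (σ = 1 ∨ σ = -1) ∧ ∀ i : ℕ,
      (childF d m x i : ℤ) = if i = 0 then (x : ℤ) + σ * ((d : ℤ) - 1) else (x : ℤ) - σ := by
  unfold childF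
  split_ifs with hb1 hb2
  · exact ⟨1, Or.inl rfl, fun i => by by_cases hi : i = 0 <;> simp [hi] <;> omega⟩
  · exact ⟨-1, Or.inr rfl, fun i => by by_cases hi : i = 0 <;> simp [hi] <;> omega⟩
  · omega

lemma childF_descr_real {d m x : ℕ} (hd : 2 ≤ d) (hm : 2 * d - 2 ≤ m)
    (h1 : 1 ≤ x) (h2 : x + 1 ≤ m) :
    ∃ σ : ℤ, (σ = 1 ∨ σ = -1) ∧ ∀ i : ℕ,
      (childF d m x i : ℝ)
        = if i = 0 then (x : ℝ) + (σ : ℝ) * ((d : ℝ) - 1) else (x : ℝ) - (σ : ℝ) := by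
  obtain ⟨σ, hσ, hch⟩ := childF_descr hd hm h1 h2
  refine ⟨σ, hσ, fun i => ?_⟩
  have h' := congrArg (fun z : ℤ => (z : ℝ)) (hch i)
  by_cases hi : i = 0
  · rw [if_pos hi]; rw [if_pos hi] at h'; push_cast at h' ⊢; exact h'
  · rw [if_neg hi]; rw [if_neg hi] at h'; push_cast at h' ⊢; exact h'

lemma sum_if_zero' (d : ℕ) (hd : 1 ≤ d) (a b : ℝ) :
    ∑ i ∈ Finset.range d, (if i = 0 then a else b) = a + ((d : ℝ) - 1) * b := by
  have h : Finset.range d = insert 0 (Finset.Ico 1 d) := by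
    ext i; simp [Finset.mem_Ico]; omega
  rw [h, Finset.sum_insert (by simp)]
  rw [Finset.sum_congr rfl (fun i hi => if_neg (by simp [Finset.mem_Ico] at hi; omega))]
  rw [Finset.sum_const, Nat.card_Ico, nsmul_eq_mul]
  have : ((d - 1 : ℕ) : ℝ) = (d : ℝ) - 1 := by push_cast [hd]; ring
  rw [this]; simp

lemma frozen_of_not_active {m x : ℕ} (hx : x ≤ m) (h : ¬ (1 ≤ x ∧ x + 1 ≤ m)) :
    x = 0 ∨ x = m := by omega

lemma sum_childF (d m x : ℕ) (hd : 2 ≤ d) (hm : 2 * d - 2 ≤ m) (hx : x ≤ m) :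
    ∑ i ∈ Finset.range d, (childF d m x i : ℝ) = d * x := by
  by_cases h : 1 ≤ x ∧ x + 1 ≤ m
  · obtain ⟨σ, hσ, hch⟩ := childF_descr_real hd hm h.1 h.2
    rw [Finset.sum_congr rfl (fun i _ => hch i), sum_if_zero' d (by omega)]
    ring
  · rw [Finset.sum_congr rfl (fun i _ => by
      rw [childF_frozen hd (frozen_of_not_active hx h)])]
    rw [Finset.sum_const, nsmul_eq_mul]; simp

lemma sum_childF_sq (d m x : ℕ) (y : ℝ) (hd : 2 ≤ d) (hm : 2 * d - 2 ≤ m) (hx : x ≤ m) :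
    ∑ i ∈ Finset.range d, ((childF d m x i : ℝ) - y) ^ 2
      = d * ((x : ℝ) - y) ^ 2
        + (if 1 ≤ x ∧ x + 1 ≤ m then ((d : ℝ) - 1) * d else 0) := by
  by_cases h : 1 ≤ x ∧ x + 1 ≤ m
  · obtain ⟨σ, hσ, hch⟩ := childF_descr_real hd hm h.1 h.2
    have hrw : ∀ i ∈ Finset.range d, ((childF d m x i : ℝ) - y) ^ 2
        = (if i = 0 then ((x : ℝ) + (σ : ℝ) * ((d : ℝ) - 1) - y) ^ 2
           else ((x : ℝ) - (σ : ℝ) - y) ^ 2) := by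
      intro i _
      by_cases hi : i = 0 <;> rw [hch i] <;> simp [hi]
    rw [Finset.sum_congr rfl hrw, sum_if_zero' d (by omega), if_pos h]
    rcases hσ with h1 | h1 <;> subst h1 <;> push_cast <;> ring
  · rw [Finset.sum_congr rfl (fun i _ => by
      rw [childF_frozen hd (frozen_of_not_active hx h)]), if_neg h]
    rw [Finset.sum_const, nsmul_eq_mul]; simp [Finset.card_range]

lemma posF_le {d m x0 : ℕ} (hx0 : x0 ≤ m) : ∀ ℓ j, posF d m x0 ℓ j ≤ m := by
  intro ℓ
  induction ℓ with
  | zero => intro j; exact hx0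
  | succ n ih => intro j; exact childF_le (ih (j / d)) _

lemma posF_succ_child (d m x0 : ℕ) (hd : 0 < d) (u j p : ℕ) (hp : p < d) :
    posF d m x0 (u + 1) (j * d + p) = childF d m (posF d m x0 u j) p := by
  have h1 : (j * d + p) / d = j := by
    rw [mul_comm, Nat.mul_add_div hd, Nat.div_eq_of_lt hp, add_zero]
  have h2 : (j * d + p) % d = p := by
    rw [mul_comm, Nat.mul_add_mod, Nat.mod_eq_of_lt hp]
  show childF d m (posF d m x0 u ((j * d + p) / d)) ((j * d + p) % d) = _
  rw [h1, h2]

lemma sum_posF_succ (d m x0 : ℕ) (hd : 0 < d) (g : ℕ → ℝ) (ℓ : ℕ) :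
    ∑ j ∈ Finset.range (d ^ (ℓ + 1)), g (posF d m x0 (ℓ + 1) j)
      = ∑ p ∈ Finset.range (d ^ ℓ), ∑ q ∈ Finset.range d,
          g (childF d m (posF d m x0 ℓ p) q) := by
  have hps : d ^ (ℓ + 1) = d ^ ℓ * d := by rw [pow_succ]
  rw [hps, sum_range_mul']
  refine Finset.sum_congr rfl fun p _ => Finset.sum_congr rfl fun q hq => ?_
  rw [posF_succ_child d m x0 hd ℓ p q (Finset.mem_range.mp hq)]

lemma blockAvg_posF (d m x0 k : ℕ) (hd : 2 ≤ d) (hm : 2 * d - 2 ≤ m) (hm0 : 0 < m)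
    (hx0 : x0 ≤ m) :
    ∀ t, t ≤ k → ∀ j,
      blockAvg (fun i => (posF d m x0 k i : ℝ) / m) (d ^ t) j
        = (posF d m x0 (k - t) j : ℝ) / m := by
  intro t
  induction t with
  | zero =>
      intro _ j
      simp [blockAvg]
  | succ t ih =>
      intro ht j
      have htk : t ≤ k := Nat.le_of_succ_le ht
      have hd0 : 0 < d := by omega
      have hdt0 : (0:ℝ) < (d:ℝ) ^ t := by positivity
      have hm0' : (0:ℝ) < (m:ℝ) := by exact_mod_cast hm0
      set s : ℕ → ℝ := fun i => (posF d m x0 k i : ℝ) / m with hs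
      set X : ℕ := posF d m x0 (k - (t+1)) j with hX
      have hps : d ^ (t+1) = d * d ^ t := by rw [pow_succ]; ring
      have hinner : ∀ p ∈ Finset.range d,
          ∑ q ∈ Finset.range (d ^ t), s (j * (d * d ^ t) + (p * d ^ t + q))
            = (d:ℝ) ^ t * ((childF d m X p : ℝ) / m) := by
        intro p hp
        have hp' : p < d := Finset.mem_range.mp hp
        have hidx : ∀ q, j * (d * d ^ t) + (p * d ^ t + q) = (j * d + p) * d ^ t + q := by
          intro q; ring
        have hsum : ∑ q ∈ Finset.range (d ^ t), s ((j * d + p) * d ^ t + q)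
            = (d:ℝ) ^ t * blockAvg s (d ^ t) (j * d + p) := by
          unfold blockAvg
          have hc : ((d ^ t : ℕ) : ℝ) = (d:ℝ) ^ t := by push_cast; ring
          rw [hc]; field_simp
        have hkt : k - t = (k - (t+1)) + 1 := by omega
        calc ∑ q ∈ Finset.range (d ^ t), s (j * (d * d ^ t) + (p * d ^ t + q))
            = ∑ q ∈ Finset.range (d ^ t), s ((j * d + p) * d ^ t + q) := by
              exact Finset.sum_congr rfl fun q _ => by rw [hidx q]
          _ = (d:ℝ) ^ t * blockAvg s (d ^ t) (j * d + p) := hsum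
          _ = (d:ℝ) ^ t * ((posF d m x0 (k - t) (j * d + p) : ℝ) / m) := by
              rw [ih htk (j * d + p)]
          _ = (d:ℝ) ^ t * ((childF d m X p : ℝ) / m) := by
              rw [hkt, posF_succ_child d m x0 hd0 _ j p hp']
      unfold blockAvg
      rw [hps, sum_range_mul', Finset.sum_congr rfl hinner]
      have hXle : X ≤ m := posF_le hx0 _ _
      rw [← Finset.mul_sum, ← Finset.sum_div, sum_childF d m X hd hm hXle]
      have : ((d * d ^ t : ℕ) : ℝ) = (d:ℝ) * (d:ℝ) ^ t := by push_cast; ring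
      rw [this]
      field_simp

/-- An active block is not `(d,ε)`-repetitive. -/
lemma active_not_blockRep (d m x0 k : ℕ) (ε : ℝ) (hd : 2 ≤ d) (hm : 2 * d - 2 ≤ m)
    (hm0 : 0 < m) (hx0 : x0 ≤ m) (hεm : ε * m < (d : ℝ) - 1)
    (ℓ j : ℕ) (hℓ : ℓ < k)
    (hact : 1 ≤ posF d m x0 ℓ j ∧ posF d m x0 ℓ j + 1 ≤ m) :
    ¬ blockRep (fun i => (posF d m x0 k i : ℝ) / m) d k ε ℓ j := by
  intro hrep
  have h0 : (0 : ℕ) ∈ Finset.range d := by simp; omega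
  have hdev := hrep 0 h0
  have hℓk : ℓ ≤ k := Nat.le_of_lt hℓ
  have hℓ1k : ℓ + 1 ≤ k := hℓ
  have hA : blockAvg (fun i => (posF d m x0 k i : ℝ) / m) (d ^ (k - ℓ)) j
      = (posF d m x0 ℓ j : ℝ) / m := by
    have := blockAvg_posF d m x0 k hd hm hm0 hx0 (k - ℓ) (Nat.sub_le _ _) j
    rwa [Nat.sub_sub_self hℓk] at this
  have hB : blockAvg (fun i => (posF d m x0 k i : ℝ) / m) (d ^ (k - (ℓ + 1))) (j * d + 0)
      = (childF d m (posF d m x0 ℓ j) 0 : ℝ) / m := by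
    have := blockAvg_posF d m x0 k hd hm hm0 hx0 (k - (ℓ + 1)) (Nat.sub_le _ _) (j * d + 0)
    rw [Nat.sub_sub_self hℓ1k] at this
    rw [this, posF_succ_child d m x0 (by omega) ℓ j 0 (by omega)]
  rw [hA, hB] at hdev
  obtain ⟨σ, hσ, hch⟩ := childF_descr_real hd hm hact.1 hact.2
  have hch0 := hch 0
  rw [if_pos rfl] at hch0
  rw [hch0] at hdev
  have hm0' : (0:ℝ) < (m:ℝ) := by exact_mod_cast hm0
  have hd2 : (2:ℝ) ≤ (d:ℝ) := by exact_mod_cast hd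
  have hcontr : ((d:ℝ) - 1) / m ≤ ε := by
    rcases hσ with h1 | h1
    · subst h1
      have he : (posF d m x0 ℓ j : ℝ) / m
          - ((posF d m x0 ℓ j : ℝ) + ((1:ℤ):ℝ) * ((d:ℝ) - 1)) / m = -(((d:ℝ)-1)/m) := by
        push_cast; ring
      rw [he, abs_neg, abs_of_nonneg (div_nonneg (by linarith) (le_of_lt hm0'))] at hdev
      exact hdev
    · subst h1
      have he : (posF d m x0 ℓ j : ℝ) / m
          - ((posF d m x0 ℓ j : ℝ) + (((-1):ℤ):ℝ) * ((d:ℝ) - 1)) / m = ((d:ℝ)-1)/m := by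
        push_cast; ring
      rw [he, abs_of_nonneg (div_nonneg (by linarith) (le_of_lt hm0'))] at hdev
      exact hdev
  have := (div_le_iff₀ hm0').mp hcontr
  linarith

noncomputable def NF (d m x0 ℓ : ℕ) : ℝ :=
  ∑ j ∈ Finset.range (d ^ ℓ),
    (if 1 ≤ posF d m x0 ℓ j ∧ posF d m x0 ℓ j + 1 ≤ m then (1:ℝ) else 0)

noncomputable def TF (d m x0 : ℕ) (y : ℝ) (ℓ : ℕ) : ℝ :=
  ∑ j ∈ Finset.range (d ^ ℓ), ((posF d m x0 ℓ j : ℝ) - y) ^ 2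

lemma NF_nonneg (d m x0 ℓ : ℕ) : 0 ≤ NF d m x0 ℓ :=
  Finset.sum_nonneg fun j _ => by positivity

lemma NF_le_pow (d m x0 ℓ : ℕ) : NF d m x0 ℓ ≤ (d:ℝ) ^ ℓ := by
  have : NF d m x0 ℓ ≤ ∑ _j ∈ Finset.range (d ^ ℓ), (1:ℝ) :=
    Finset.sum_le_sum fun j _ => by split_ifs <;> norm_num
  simpa using this

lemma NF_zero (d m x0 : ℕ) (h : 1 ≤ x0 ∧ x0 + 1 ≤ m) : NF d m x0 0 = 1 := by
  simp [NF, posF, h]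

lemma NF_rec (d m x0 ℓ : ℕ) (hd : 2 ≤ d) (hx0 : x0 ≤ m) :
    NF d m x0 (ℓ + 1) ≤ d * NF d m x0 ℓ := by
  unfold NF
  rw [sum_posF_succ d m x0 (by omega) (fun x => if 1 ≤ x ∧ x + 1 ≤ m then (1:ℝ) else 0) ℓ, Finset.mul_sum]
  apply Finset.sum_le_sum
  intro p _
  by_cases hact : 1 ≤ posF d m x0 ℓ p ∧ posF d m x0 ℓ p + 1 ≤ m
  · rw [if_pos hact, mul_one]
    have : ∑ q ∈ Finset.range d,
        (if 1 ≤ childF d m (posF d m x0 ℓ p) q ∧ childF d m (posF d m x0 ℓ p) q + 1 ≤ m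
         then (1:ℝ) else 0) ≤ ∑ _q ∈ Finset.range d, (1:ℝ) :=
      Finset.sum_le_sum fun q _ => by split_ifs <;> norm_num
    simpa using this
  · rw [if_neg hact, mul_zero]
    have hfr := frozen_of_not_active (posF_le hx0 ℓ p) hact
    rw [Finset.sum_congr rfl (fun q _ => by
      rw [childF_frozen hd hfr, if_neg hact])]
    simp

lemma TF_rec (d m x0 : ℕ) (y : ℝ) (ℓ : ℕ) (hd : 2 ≤ d) (hm : 2 * d - 2 ≤ m)
    (hx0 : x0 ≤ m) :
    TF d m x0 y (ℓ + 1) = d * TF d m x0 y ℓ + ((d:ℝ) - 1) * d * NF d m x0 ℓ := by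
  unfold TF
  rw [sum_posF_succ d m x0 (by omega) (fun x => ((x:ℝ) - y) ^ 2) ℓ]
  rw [Finset.sum_congr rfl (fun p _ =>
    sum_childF_sq d m (posF d m x0 ℓ p) y hd hm (posF_le hx0 ℓ p))]
  rw [Finset.sum_add_distrib, ← Finset.mul_sum]
  unfold NF
  congr 1
  rw [Finset.mul_sum]
  apply Finset.sum_congr rfl
  intro p _
  split_ifs <;> ring

lemma TF_telescope (d m x0 : ℕ) (y : ℝ) (hd : 2 ≤ d) (hm : 2 * d - 2 ≤ m)
    (hx0 : x0 ≤ m) (k : ℕ) :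
    TF d m x0 y k / (d:ℝ) ^ k
      = ((x0:ℝ) - y) ^ 2
        + ((d:ℝ) - 1) * ∑ ℓ ∈ Finset.range k, NF d m x0 ℓ / (d:ℝ) ^ ℓ := by
  have hd0 : (0:ℝ) < (d:ℝ) := by
    have : (2:ℝ) ≤ (d:ℝ) := by exact_mod_cast hd
    linarith
  induction k with
  | zero => simp [TF, posF]
  | succ k ih =>
      have hdk : (0:ℝ) < (d:ℝ) ^ k := by positivity
      rw [TF_rec d m x0 y k hd hm hx0, Finset.sum_range_succ, pow_succ]
      have hsplit : ((d:ℝ) * TF d m x0 y k + ((d:ℝ)-1) * (d:ℝ) * NF d m x0 k)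
          / ((d:ℝ)^k * (d:ℝ))
          = TF d m x0 y k / (d:ℝ)^k + ((d:ℝ)-1) * (NF d m x0 k / (d:ℝ)^k) := by
        field_simp
      rw [hsplit, ih]; ring

lemma TF_lower (d m x0 k : ℕ) (hd : 2 ≤ d) (hx0m : x0 ≤ m)
    (hc : 2 * x0 ≤ m ∧ m ≤ 2 * x0 + 1) (hm1 : 1 ≤ m) :
    ((d:ℝ) ^ k - NF d m x0 k) * (((m:ℝ) - 1) / 2) ^ 2 ≤ TF d m x0 (x0:ℝ) k := by
  have hc1 : 2 * (x0:ℝ) ≤ (m:ℝ) := by exact_mod_cast hc.1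
  have hc2 : (m:ℝ) ≤ 2 * (x0:ℝ) + 1 := by exact_mod_cast hc.2
  have hm1' : (1:ℝ) ≤ (m:ℝ) := by exact_mod_cast hm1
  have hpoint : ∀ j ∈ Finset.range (d ^ k),
      ((1:ℝ) - (if 1 ≤ posF d m x0 k j ∧ posF d m x0 k j + 1 ≤ m then (1:ℝ) else 0))
        * (((m:ℝ) - 1) / 2) ^ 2 ≤ ((posF d m x0 k j : ℝ) - (x0:ℝ)) ^ 2 := by
    intro j _
    by_cases hact : 1 ≤ posF d m x0 k j ∧ posF d m x0 k j + 1 ≤ m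
    · rw [if_pos hact]; simp; positivity
    · rw [if_neg hact]
      rcases frozen_of_not_active (posF_le hx0m k j) hact with h0 | h0 <;> rw [h0]
      · have h : ((m:ℝ) - 1) / 2 ≤ (x0:ℝ) := by linarith
        have h0' : (0:ℝ) ≤ ((m:ℝ) - 1) / 2 := by linarith
        have := pow_le_pow_left₀ h0' h 2
        simpa using this
      · have h : ((m:ℝ) - 1) / 2 ≤ (m:ℝ) - (x0:ℝ) := by linarith
        have h0' : (0:ℝ) ≤ ((m:ℝ) - 1) / 2 := by linarith
        have := pow_le_pow_left₀ h0' h 2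
        simpa using this
  have hsum : ∑ j ∈ Finset.range (d ^ k),
      ((1:ℝ) - (if 1 ≤ posF d m x0 k j ∧ posF d m x0 k j + 1 ≤ m then (1:ℝ) else 0))
        * (((m:ℝ) - 1) / 2) ^ 2
      = ((d:ℝ) ^ k - NF d m x0 k) * (((m:ℝ) - 1) / 2) ^ 2 := by
    rw [← Finset.sum_mul]
    congr 1
    rw [Finset.sum_sub_distrib]
    unfold NF
    simp [Finset.card_range]
  calc ((d:ℝ) ^ k - NF d m x0 k) * (((m:ℝ) - 1) / 2) ^ 2
      = _ := hsum.symm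
    _ ≤ TF d m x0 (x0:ℝ) k := Finset.sum_le_sum hpoint

set_option maxHeartbeats 1600000

/-- There is a universal constant `c > 0` such that for every `d ≥ 2` and
`ε, δ ∈ (0, 1/2)`, setting `k = ⌈c d / (ε² δ)⌉`, there is a string of length
`d ^ k` with entries in `[0,1]` that is not `(d, ε, δ)`-locally repetitive. -/
theorem exists_not_locally_repetitive :
    ∃ c : ℝ, 0 < c ∧ ∀ d : ℕ, 2 ≤ d → ∀ ε δ : ℝ,
      ε ∈ Set.Ioo (0 : ℝ) (1 / 2) → δ ∈ Set.Ioo (0 : ℝ) (1 / 2) →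
      ∀ k : ℕ, k = ⌈c * d / (ε ^ 2 * δ)⌉₊ →
        ∃ s : ℕ → ℝ, (∀ i < d ^ k, s i ∈ Set.Icc (0 : ℝ) 1) ∧
          δ < (1 / k : ℝ) * ∑ ℓ ∈ Finset.range k, badFrac s d k ε ℓ := by
  refine ⟨1/1024, by norm_num, ?_⟩
  intro d hd ε δ hε hδ k hk
  obtain ⟨hε0, hε2⟩ := hε
  obtain ⟨hδ0, hδ2⟩ := hδ
  have hd2 : (2:ℝ) ≤ (d:ℝ) := by exact_mod_cast hd
  have hd0 : 0 < d := by omega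
  obtain ⟨r, hr⟩ : ∃ r : ℝ, r = ((d:ℝ) - 1) / ε := ⟨_, rfl⟩
  have hr0 : 0 < r := by rw [hr]; exact div_pos (by linarith) hε0
  obtain ⟨m, hmdef⟩ : ∃ m : ℕ, m = ⌈r⌉₊ - 1 := ⟨_, rfl⟩
  have hceil1 : 2 * d - 2 < ⌈r⌉₊ := by
    rw [Nat.lt_ceil]
    have h1 : ((2 * d - 2 : ℕ) : ℝ) = 2 * (d:ℝ) - 2 := by
      have h2 : (2:ℕ) ≤ 2 * d := by omega
      push_cast [h2]; ring
    rw [h1, hr, lt_div_iff₀ hε0]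
    nlinarith
  have hm2d : 2 * d - 2 ≤ m := by omega
  have hm0 : 0 < m := by omega
  have hm0' : (0:ℝ) < m := by exact_mod_cast hm0
  have hceilpos : 1 ≤ ⌈r⌉₊ := by omega
  have hmcast : (m:ℝ) = (⌈r⌉₊ : ℝ) - 1 := by
    rw [hmdef]; push_cast [hceilpos]; ring
  have hmlt : (m:ℝ) < r := by
    have h1 : (⌈r⌉₊ : ℝ) < r + 1 := Nat.ceil_lt_add_one (le_of_lt hr0)
    rw [hmcast]; linarith
  have hmge : r - 2 ≤ (m:ℝ) := by
    have h1 : r ≤ (⌈r⌉₊ : ℝ) := Nat.le_ceil r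
    rw [hmcast]; linarith
  have hεm : ε * m < (d:ℝ) - 1 := by
    have h1 := hmlt
    rw [hr] at h1
    have := (lt_div_iff₀ hε0).mp h1
    linarith
  obtain ⟨x0, hx0def⟩ : ∃ x0 : ℕ, x0 = m / 2 := ⟨_, rfl⟩
  have hx0m : x0 ≤ m := by rw [hx0def]; exact Nat.div_le_self m 2
  have hx0act : 1 ≤ x0 ∧ x0 + 1 ≤ m := by omega
  have hcx0 : 2 * x0 ≤ m ∧ m ≤ 2 * x0 + 1 := by omega
  refine ⟨fun i => (posF d m x0 k i : ℝ) / m, ?_, ?_⟩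
  · intro i _
    constructor
    · positivity
    · rw [div_le_one hm0']
      exact_mod_cast posF_le hx0m k i
  have hkpos : 0 < k := by
    rw [hk, Nat.ceil_pos]; positivity
  have hk0' : (0:ℝ) < k := by exact_mod_cast hkpos
  have hbad : ∀ ℓ ∈ Finset.range k,
      NF d m x0 ℓ / (d:ℝ)^ℓ
        ≤ badFrac (fun i => (posF d m x0 k i : ℝ) / m) d k ε ℓ := by
    intro ℓ hℓ
    have hℓk : ℓ < k := Finset.mem_range.mp hℓ
    unfold badFrac
    have hNcard : NF d m x0 ℓ = (((Finset.range (d^ℓ)).filter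
        (fun j => 1 ≤ posF d m x0 ℓ j ∧ posF d m x0 ℓ j + 1 ≤ m)).card : ℝ) := by
      unfold NF; rw [Finset.sum_boole]
    have hsub : (Finset.range (d^ℓ)).filter
          (fun j => 1 ≤ posF d m x0 ℓ j ∧ posF d m x0 ℓ j + 1 ≤ m)
        ⊆ (Finset.range (d^ℓ)).filter
          (fun j => ¬ blockRep (fun i => (posF d m x0 k i : ℝ) / m) d k ε ℓ j) := by
      intro j hj
      rw [Finset.mem_filter] at hj ⊢
      exact ⟨hj.1, active_not_blockRep d m x0 k ε hd hm2d hm0 hx0m hεm ℓ j hℓk hj.2⟩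
    rw [hNcard]
    exact div_le_div_of_nonneg_right (by exact_mod_cast Finset.card_le_card hsub)
      (by positivity)
  obtain ⟨S, hS⟩ : ∃ S : ℝ, S = ∑ ℓ ∈ Finset.range k, NF d m x0 ℓ / (d:ℝ)^ℓ := ⟨_, rfl⟩
  have hSle : S ≤ ∑ ℓ ∈ Finset.range k,
      badFrac (fun i => (posF d m x0 k i : ℝ) / m) d k ε ℓ := by
    rw [hS]; exact Finset.sum_le_sum hbad
  have hA_nonneg : ∀ ℓ, 0 ≤ NF d m x0 ℓ / (d:ℝ)^ℓ := by
    intro ℓ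
    have := NF_nonneg d m x0 ℓ
    positivity
  have hA_anti : Antitone (fun ℓ => NF d m x0 ℓ / (d:ℝ)^ℓ) := by
    apply antitone_nat_of_succ_le
    intro ℓ
    have h := NF_rec d m x0 ℓ hd hx0m
    have hp : (0:ℝ) < (d:ℝ)^ℓ := by positivity
    have hp1 : (0:ℝ) < (d:ℝ)^(ℓ+1) := by positivity
    rw [div_le_div_iff₀ hp1 hp, pow_succ]
    nlinarith [mul_le_mul_of_nonneg_right h (le_of_lt hp)]
  -- k upper bound
  have hkub : (k:ℝ) ≤ 1/1024 * (d:ℝ) / (ε^2*δ) + 1 := by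
    rw [hk]; exact le_of_lt (Nat.ceil_lt_add_one (by positivity))
  have hδk : δ * k ≤ 1/1024 * (d:ℝ)/ε^2 + δ := by
    have he : δ * (1/1024 * (d:ℝ) / (ε^2*δ) + 1) = 1/1024 * (d:ℝ)/ε^2 + δ := by
      field_simp
    calc δ * k ≤ δ * (1/1024 * (d:ℝ) / (ε^2*δ) + 1) :=
          mul_le_mul_of_nonneg_left hkub (le_of_lt hδ0)
      _ = _ := he
  have key : δ * k < S := by
    by_cases hcase : 1/2 ≤ NF d m x0 k / (d:ℝ)^k
    · have h1 : (k:ℝ) * (1/2) ≤ S := by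
        rw [hS]
        have : ∑ _ℓ ∈ Finset.range k, (1/2 : ℝ) ≤ ∑ ℓ ∈ Finset.range k, NF d m x0 ℓ / (d:ℝ)^ℓ := by
          apply Finset.sum_le_sum
          intro ℓ hℓ
          exact le_trans hcase (hA_anti (le_of_lt (Finset.mem_range.mp hℓ)))
        simpa [mul_comm] using this
      nlinarith
    · push_neg at hcase
      have htel := TF_telescope d m x0 (x0:ℝ) hd hm2d hx0m k
      have hlow := TF_lower d m x0 k hd hx0m hcx0 (by omega)
      have hdk : (0:ℝ) < (d:ℝ)^k := by positivity
      have htel' : TF d m x0 (x0:ℝ) k / (d:ℝ)^k = ((d:ℝ)-1) * S := by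
        rw [htel, hS]; simp
      have hlow' : (1 - NF d m x0 k / (d:ℝ)^k) * (((m:ℝ)-1)/2)^2 ≤ ((d:ℝ)-1) * S := by
        rw [← htel']
        have heq1 : (1 - NF d m x0 k / (d:ℝ)^k) = ((d:ℝ)^k - NF d m x0 k) / (d:ℝ)^k := by
          field_simp
        rw [heq1, div_mul_eq_mul_div]
        exact div_le_div_of_nonneg_right hlow (le_of_lt hdk)
      have hSge1 : 1 ≤ S := by
        have h0 : NF d m x0 0 / (d:ℝ)^0 = 1 := by
          rw [NF_zero d m x0 hx0act]; simp
        rw [hS]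
        calc (1:ℝ) = NF d m x0 0 / (d:ℝ)^0 := h0.symm
          _ ≤ _ := Finset.single_le_sum (f := fun ℓ => NF d m x0 ℓ / (d:ℝ)^ℓ)
              (fun ℓ _ => hA_nonneg ℓ) (Finset.mem_range.mpr hkpos)
      have hDsq : (((m:ℝ)-1)/2)^2 * (1/2) ≤ ((d:ℝ)-1) * S := by
        have hhalf : (1/2:ℝ) ≤ 1 - NF d m x0 k / (d:ℝ)^k := by linarith
        have hstep := mul_le_mul_of_nonneg_right hhalf (sq_nonneg (((m:ℝ)-1)/2))
        linarith [hlow', hstep]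
      by_cases hsmall : (d:ℝ)/ε^2 ≤ 512
      · have h1 : 1/1024 * (d:ℝ)/ε^2 ≤ 1/2 := by
          rw [mul_div_assoc]
          linarith
        linarith
      · push_neg at hsmall
        have hε2pos : (0:ℝ) < ε^2 := by positivity
        have hsmall' : 512 * ε^2 < (d:ℝ) := (lt_div_iff₀ hε2pos).mp hsmall
        have hr16 : 16 * ε ≤ (d:ℝ) - 1 := by
          by_cases hεs : ε ≤ 1/16
          · linarith
          · push_neg at hεs
            nlinarith [mul_nonneg (by linarith : (0:ℝ) ≤ 16*ε - 1) (by linarith : (0:ℝ) ≤ 32*ε + 1)]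
        have hrr : 16 ≤ r := by
          rw [hr, le_div_iff₀ hε0]
          linarith
        have hm13 : 13/16 * r ≤ (m:ℝ) - 1 := by linarith
        have hd1pos : (0:ℝ) < (d:ℝ) - 1 := by linarith
        have h1 : 169/2048 * r^2 ≤ ((d:ℝ)-1) * S := by
          nlinarith [hDsq, mul_nonneg (by linarith : (0:ℝ) ≤ ((m:ℝ)-1)/2 - 13/32*r)
            (by linarith : (0:ℝ) ≤ ((m:ℝ)-1)/2 + 13/32*r)]
        have hr2 : r^2 * ε^2 = ((d:ℝ)-1)^2 := by
          rw [hr]; field_simp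
        have hSε : 169/2048 * ((d:ℝ)-1) ≤ S * ε^2 := by
          have h2 : 169/2048 * r^2 * ε^2 ≤ ((d:ℝ)-1) * S * ε^2 :=
            mul_le_mul_of_nonneg_right h1 (le_of_lt hε2pos)
          have h3 : ((d:ℝ)-1) * (169/2048 * ((d:ℝ)-1)) ≤ ((d:ℝ)-1) * (S * ε^2) := by
            nlinarith [hr2]
          exact le_of_mul_le_mul_left h3 hd1pos
        have hgoal : 1/1024 * (d:ℝ)/ε^2 + δ < S := by
          rw [show 1/1024 * (d:ℝ)/ε^2 + δ = (1/1024 * (d:ℝ) + δ*ε^2)/ε^2 by field_simp]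
          rw [div_lt_iff₀ hε2pos]
          have h4 : δ * ε^2 ≤ 1/2 * ε^2 :=
            mul_le_mul_of_nonneg_right (le_of_lt hδ2) (le_of_lt hε2pos)
          linarith [hSε, hsmall', h4, hd2]
        linarith
  have hfinal : δ * k < ∑ ℓ ∈ Finset.range k,
      badFrac (fun i => (posF d m x0 k i : ℝ) / m) d k ε ℓ := lt_of_lt_of_le key hSle
  have h2 : δ < (∑ ℓ ∈ Finset.range k,
      badFrac (fun i => (posF d m x0 k i : ℝ) / m) d k ε ℓ) / k :=
    (lt_div_iff₀ hk0').mpr hfinal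
  calc δ < _ := h2
    _ = (1 / k : ℝ) * ∑ ℓ ∈ Finset.range k,
        badFrac (fun i => (posF d m x0 k i : ℝ) / m) d k ε ℓ := by ring
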